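/- Let g, κ : [0,∞) → ℝ be non-decreasing, right-continuous with left limits, g(0)=κ(0)=0, both strictly positive on (0,∞) and unbounded, and suppose the pair (g,κ) is compatible: (H1) whenever g jumps at u, the level set {r : κ(r) = u} has positive length, and (H2) whenever κ(s−) < κ(s), g(κ(s−)) = g(κ(s)−). Then the smooth composition g ∘̃ κ satisfies g(κ(t)−) ≤ (g ∘̃ κ)(t) ≤ g(κ(t)) for all t ≥ 0. -/

import Mathlib

open Set Function Filter

/-- Right-continuous generalized inverse: `h⁻¹(s) = inf {u > 0 : h(u) > s}`. -/
noncomputable def ginv (h : ℝ → ℝ) (s : ℝ) : ℝ := sInf {u : ℝ | 0 < u ∧ s < h u}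

/-- Left limit of a function monotone on `[0,∞)`, with the convention `h(0−) = h(0)`. -/
noncomputable def llim (h : ℝ → ℝ) (u : ℝ) : ℝ :=
  if u ≤ 0 then h 0 else sSup (h '' Set.Ico 0 u)

/-- Right-continuity on `[0,∞)`. -/
def RightCts (h : ℝ → ℝ) : Prop := ∀ x : ℝ, 0 ≤ x → ContinuousWithinAt h (Set.Ici x) x

/-- The class `D₀↑↑(ℝ₊)`: non-decreasing, right-continuous, `h 0 = 0`, strictly
positive on `(0,∞)`, and unbounded. -/
def Dpp (h : ℝ → ℝ) : Prop :=
  MonotoneOn h (Set.Ici 0) ∧ RightCts h ∧ h 0 = 0 ∧ (∀ t : ℝ, 0 < t → 0 < h t) ∧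
    (∀ M : ℝ, ∃ t : ℝ, 0 ≤ t ∧ M < h t)

/-- `h` jumps at `u`: `h(u−) < h(u)`. -/
noncomputable def JumpAt (h : ℝ → ℝ) (u : ℝ) : Prop := llim h u < h u

/-- Compatibility condition (H1): whenever `g` jumps at `u`, the level set
`{r ≥ 0 : κ r = u}` has positive length. -/
def H1 (g κ : ℝ → ℝ) : Prop :=
  ∀ u : ℝ, JumpAt g u → ∃ r₁ r₂ : ℝ, 0 ≤ r₁ ∧ r₁ < r₂ ∧ κ r₁ = u ∧ κ r₂ = u

/-- Compatibility condition (H2): whenever `κ(s−) < κ(s)`, `g(κ(s−)) = g(κ(s)−)`. -/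
def H2 (g κ : ℝ → ℝ) : Prop :=
  ∀ s : ℝ, 0 ≤ s → llim κ s < κ s → g (llim κ s) = llim g (κ s)

-- Smooth composition `g ∘̃ κ`: equal to `g ∘ κ` outside the intervals
-- `[κ⁻¹(u−), κ⁻¹(u)]` over jump points `u` of `g`, and on each such interval the linear
-- interpolation between `(κ⁻¹(u−), g(u−))` and `(κ⁻¹(u), g(u))`.
open scoped Classical in
noncomputable def stilde (g κ : ℝ → ℝ) (s : ℝ) : ℝ :=
  if h : ∃ u : ℝ, JumpAt g u ∧ s ∈ Set.Icc (llim (ginv κ) u) (ginv κ u) then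
    let u := Classical.choose h
    llim g u + (g u - llim g u) * (s - llim (ginv κ) u) / (ginv κ u - llim (ginv κ) u)
  else g (κ s)

open scoped Topology

lemma llim_le_self {h : ℝ → ℝ} (hm : MonotoneOn h (Set.Ici 0)) {x : ℝ} (hx : 0 ≤ x) :
    llim h x ≤ h x := by
  rw [llim]
  split_ifs with h0
  · exact hm (Set.mem_Ici.2 le_rfl) hx hx
  · refine csSup_le ⟨h 0, 0, ⟨le_rfl, not_le.1 h0⟩, rfl⟩ ?_
    rintro y ⟨r, ⟨hr0, hrx⟩, rfl⟩
    exact hm hr0 hx hrx.le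

/-- For a compatible pair, `g(κ(t)−) ≤ (g ∘̃ κ)(t) ≤ g(κ(t))`. -/
theorem stmt5 (g κ : ℝ → ℝ) (hg : Dpp g) (hκ : Dpp κ)
    (h1 : H1 g κ) (h2 : H2 g κ) :
    ∀ t : ℝ, 0 ≤ t → llim g (κ t) ≤ stilde g κ t ∧ stilde g κ t ≤ g (κ t) := by
  obtain ⟨hgm, hgr, hg0, hgpos, hgub⟩ := hg
  obtain ⟨hκm, hκr, hκ0, hκpos, hκub⟩ := hκ
  intro t ht
  have hκt0 : 0 ≤ κ t := by
    have := hκm (Set.mem_Ici.2 le_rfl) ht ht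
    rw [hκ0] at this; exact this
  rw [stilde]
  split_ifs with hj
  · -- jump case
    obtain ⟨hju, hta, htb⟩ := Classical.choose_spec hj
    set u := Classical.choose hj with hu
    set a := llim (ginv κ) u with ha
    set b := ginv κ u with hb
    obtain ⟨r₁, r₂, hr₁0, hr12, hκr₁, hκr₂⟩ := h1 u hju
    -- u > 0
    have hu0 : 0 ≤ u := by
      rw [← hκr₁]
      have := hκm (Set.mem_Ici.2 le_rfl) hr₁0 hr₁0
      rw [hκ0] at this; exact this
    have hupos : 0 < u := by
      rcases hu0.lt_or_eq with h | h
      · exact h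
      · exfalso
        have : llim g u = g u := by rw [llim, if_pos h.ge]; rw [← h]
        exact absurd hju (by rw [JumpAt, this]; exact lt_irrefl _)
    have hr₁pos : 0 < r₁ := by
      rcases hr₁0.lt_or_eq with h | h
      · exact h
      · exfalso; rw [← h, hκ0] at hκr₁; linarith
    -- nonemptiness / boundedness of the ginv sets
    have hSne : ∀ x : ℝ, {r : ℝ | 0 < r ∧ x < κ r}.Nonempty := by
      intro x
      obtain ⟨t₀, ht₀0, ht₀⟩ := hκub x
      have h1' : κ t₀ ≤ κ (t₀ + 1) :=
        hκm (Set.mem_Ici.2 ht₀0) (Set.mem_Ici.2 (by linarith)) (by linarith)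
      refine ⟨t₀ + 1, Set.mem_setOf_eq ▸ ⟨by linarith, by linarith⟩⟩
    have hSbd : ∀ x : ℝ, BddBelow {r : ℝ | 0 < r ∧ x < κ r} := fun x => ⟨0, fun r hr => hr.1.le⟩
    -- a = sSup form
    have haeq : a = sSup (ginv κ '' Set.Ico 0 u) := by
      rw [ha, llim, if_neg (not_le.2 hupos)]
    have himgbdd : ∀ y ∈ ginv κ '' Set.Ico 0 u, y ≤ r₁ := by
      rintro y ⟨u', ⟨hu'0, hu'u⟩, rfl⟩
      exact csInf_le (hSbd u') ⟨hr₁pos, by rw [hκr₁]; exact hu'u⟩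
    have hbddA : BddAbove (ginv κ '' Set.Ico 0 u) := ⟨r₁, himgbdd⟩
    have ha1 : a ≤ r₁ := by
      rw [haeq]
      exact csSup_le ⟨ginv κ 0, 0, ⟨le_rfl, hupos⟩, rfl⟩ himgbdd
    have hb2 : r₂ ≤ b := by
      refine le_csInf (hSne u) ?_
      rintro r ⟨hr0, hur⟩
      by_contra hc
      push_neg at hc
      have : κ r ≤ κ r₂ := hκm hr0.le (hr₁0.trans hr12.le) hc.le
      rw [hκr₂] at this; linarith
    have hab : a < b := lt_of_le_of_lt ha1 (lt_of_lt_of_le hr12 hb2)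
    -- κ s ≥ u for s > max(a,0)
    have step1 : ∀ s : ℝ, 0 < s → a < s → u ≤ κ s := by
      intro s hs0 has
      by_contra hc
      push_neg at hc
      have hκs0 : 0 ≤ κ s := by
        have := hκm (Set.mem_Ici.2 le_rfl) hs0.le hs0.le
        rw [hκ0] at this; exact this
      have hgesv : s ≤ ginv κ (κ s) := by
        refine le_csInf (hSne (κ s)) ?_
        rintro r ⟨hr0, hκsr⟩
        by_contra hrs
        push_neg at hrs
        have := hκm hr0.le hs0.le hrs.le
        linarith
      have : ginv κ (κ s) ≤ a := by
        rw [haeq]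
        exact le_csSup hbddA ⟨κ s, ⟨hκs0, hc⟩, rfl⟩
      linarith
    have step2 : u ≤ κ t := by
      have htend : Tendsto κ (𝓝[>] t) (𝓝 (κ t)) :=
        (hκr t ht).mono_left (nhdsWithin_mono _ Set.Ioi_subset_Ici_self)
      refine ge_of_tendsto htend ?_
      refine eventually_nhdsWithin_of_forall ?_
      intro s hs
      exact step1 s (lt_of_le_of_lt ht hs) (lt_of_le_of_lt hta hs)
    -- jump size and interpolation bounds
    have hd : llim g u < g u := hju
    have hta' : 0 ≤ t - a := by linarith
    have htb' : t - a ≤ b - a := by linarith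
    have hba : 0 < b - a := by linarith
    have hlow : llim g u ≤ llim g u + (g u - llim g u) * (t - a) / (b - a) := by
      have : 0 ≤ (g u - llim g u) * (t - a) / (b - a) :=
        div_nonneg (mul_nonneg (by linarith) hta') hba.le
      linarith
    have hhigh : llim g u + (g u - llim g u) * (t - a) / (b - a) ≤ g u := by
      have hq : (g u - llim g u) * (t - a) / (b - a) ≤ g u - llim g u := by
        rw [div_le_iff₀ hba]
        nlinarith [mul_le_mul_of_nonneg_left htb' (le_of_lt (sub_pos.2 hd))]
      linarith
    show llim g (κ t) ≤ llim g u + (g u - llim g u) * (t - a) / (b - a) ∧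
        llim g u + (g u - llim g u) * (t - a) / (b - a) ≤ g (κ t)
    rcases step2.lt_or_eq with hlt | heq
    · -- u < κ t : then t = b
      have htpos : 0 < t := by
        rcases ht.lt_or_eq with h | h
        · exact h
        · exfalso; rw [← h, hκ0] at hlt; linarith
      have hbt : b ≤ t := csInf_le (hSbd u) ⟨htpos, hlt⟩
      have hteq : t = b := le_antisymm htb hbt
      have hvb : llim g u + (g u - llim g u) * (t - a) / (b - a) = g u := by
        rw [hteq, mul_div_assoc, div_self (by linarith), mul_one]; ring
      -- κ jumps over u at b
      have hbpos : 0 < b := hteq ▸ htpos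
      have hllimκ : llim κ b = sSup (κ '' Set.Ico 0 b) := by
        rw [llim, if_neg (not_le.2 hbpos)]
      have hκb_le : ∀ y ∈ κ '' Set.Ico 0 b, y ≤ u := by
        rintro y ⟨r, ⟨hr0, hrb⟩, rfl⟩
        by_contra hc
        push_neg at hc
        have hr0' : 0 < r := by
          rcases hr0.lt_or_eq with h | h
          · exact h
          · exfalso; rw [← h, hκ0] at hc; linarith
        have hbr : b ≤ r := csInf_le (hSbd u) (⟨hr0', hc⟩ : r ∈ {r : ℝ | 0 < r ∧ u < κ r})
        linarith
      have hlκb_u : llim κ b ≤ u := by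
        rw [hllimκ]
        exact csSup_le ⟨κ 0, 0, ⟨le_rfl, hbpos⟩, rfl⟩ hκb_le
      have hlκb_0 : 0 ≤ llim κ b := by
        rw [hllimκ]
        have := le_csSup ⟨u, hκb_le⟩ (⟨0, ⟨le_rfl, hbpos⟩, rfl⟩ : κ 0 ∈ κ '' Set.Ico 0 b)
        rw [hκ0] at this; exact this
      have hκbt : κ b = κ t := by rw [hteq]
      have hjumpκ : llim κ b < κ b := by rw [hκbt]; exact lt_of_le_of_lt hlκb_u hlt
      have hH2 := h2 b (by linarith) hjumpκ
      constructor
      · rw [← hκbt, ← hH2, hvb]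
        exact hgm hlκb_0 hu0 hlκb_u
      · rw [hvb]
        exact hgm hu0 hκt0 hlt.le
    · -- κ t = u
      rw [← heq]
      exact ⟨hlow, hhigh⟩
  · exact ⟨llim_le_self hgm hκt0, le_rfl⟩
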